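/- Let A ∈ ℝ^{d×n} be a matrix with tropical rank rk_t(A) = r and Kapranov rank rk_K(A) > r. Then there exists a matrix B ∈ ℝ^{(d+1)×(n+1)} with tropical rank rk_t(B) = r + 1 and Kapranov rank rk_K(B) > r + 1. -/

import Mathlib

noncomputable section

/-- The field of generalized power series over ℝ with complex coefficients. -/
abbrev K : Type := HahnSeries ℝ ℂ

open Classical in
/-- The degree of an element of `K`: the least exponent of its support, `⊤` for `0`. -/
noncomputable def Kdeg (a : K) : WithTop ℝ :=
  if a = 0 then ⊤ else ((HahnSeries.order a : ℝ) : WithTop ℝ)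

/-- A square real matrix is tropically non-singular if the minimum in the tropical
permanent is attained by exactly one permutation. -/
def TropNonsing {k : ℕ} (S : Matrix (Fin k) (Fin k) ℝ) : Prop :=
  ∃! σ : Equiv.Perm (Fin k), ∀ τ : Equiv.Perm (Fin k),
    (∑ i, S i (σ i)) ≤ ∑ i, S i (τ i)

/-- The tropical rank: the largest size of a tropically non-singular square submatrix. -/
noncomputable def tropRank {m n : ℕ} (A : Matrix (Fin m) (Fin n) ℝ) : ℕ :=
  sSup {r : ℕ | ∃ (ρ : Fin r → Fin m) (c : Fin r → Fin n),
    Function.Injective ρ ∧ Function.Injective c ∧ TropNonsing (A.submatrix ρ c)}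

/-- A matrix over `K` is a lift of a real matrix if degrees of entries match. -/
def IsLift {m n : ℕ} (F : Matrix (Fin m) (Fin n) K) (B : Matrix (Fin m) (Fin n) ℝ) : Prop :=
  ∀ i j, Kdeg (F i j) = (B i j : WithTop ℝ)

/-- The Kapranov rank: the smallest rank over `K` of a lift. -/
noncomputable def kapRank {m n : ℕ} (B : Matrix (Fin m) (Fin n) ℝ) : ℕ :=
  sInf {r : ℕ | ∃ F : Matrix (Fin m) (Fin n) K, IsLift F B ∧ F.rank = r}

/-- The tuple `lam` realizes the tropical dependence of the rows of `A`. -/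
def Realizes {m n : ℕ} (lam : Fin m → WithTop ℝ) (A : Matrix (Fin m) (Fin n) ℝ) : Prop :=
  (∃ τ, lam τ ≠ ⊤) ∧
  ∀ k : Fin n, ∃ τ₁ τ₂ : Fin m, τ₁ ≠ τ₂ ∧
    (∀ τ, lam τ₁ + (A τ₁ k : WithTop ℝ) ≤ lam τ + (A τ k : WithTop ℝ)) ∧
    (∀ τ, lam τ₂ + (A τ₂ k : WithTop ℝ) ≤ lam τ + (A τ k : WithTop ℝ))

open Classical in
/-- The pattern of a real matrix, with entries in `{0, ∞} ⊆ ℝ ∪ {∞}`. -/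
noncomputable def pat {m n : ℕ} (A : Matrix (Fin m) (Fin n) ℝ) (u : Fin m) (v : Fin n) :
    WithTop ℝ :=
  if ∀ i, A u v ≤ A i v then 0 else ⊤

/-- The support of the `j`-th column of the pattern of `A`. -/
def colSupp {m n : ℕ} (A : Matrix (Fin m) (Fin n) ℝ) (j : Fin n) : Set (Fin m) :=
  {u | ∀ i, A u j ≤ A i j}



/-! ### Auxiliary lemmas -/

section Aux

open Equiv Matrix

lemma Kdeg_eq_real {x : K} {b : ℝ} (h : Kdeg x = (b : WithTop ℝ)) :
    x ≠ 0 ∧ x.order = b := by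
  by_cases h0 : x = 0
  · rw [Kdeg, if_pos h0] at h
    exact absurd h.symm WithTop.coe_ne_top
  · rw [Kdeg, if_neg h0] at h
    exact ⟨h0, by exact_mod_cast h⟩

lemma Kdeg_eq_of {x : K} (h0 : x ≠ 0) {b : ℝ} (h : x.order = b) :
    Kdeg x = (b : WithTop ℝ) := by
  rw [Kdeg, if_neg h0, h]

lemma order_sub_of_lt {x y : K} (hx : x ≠ 0) (h : x.order < y.order) :
    x - y ≠ 0 ∧ (x - y).order = x.order := by
  have hyc : y.coeff x.order = 0 := HahnSeries.coeff_eq_zero_of_lt_order h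
  have hcoeff : (x - y).coeff x.order ≠ 0 := by
    rw [HahnSeries.coeff_sub, hyc, sub_zero]
    exact HahnSeries.coeff_order_eq_zero.not.mpr hx
  have hne : x - y ≠ 0 := by
    intro h0; rw [h0] at hcoeff; simp at hcoeff
  refine ⟨hne, le_antisymm (HahnSeries.order_le_of_coeff_ne_zero hcoeff) ?_⟩
  by_contra hlt
  push_neg at hlt
  have h1 : x.coeff (x - y).order = 0 := HahnSeries.coeff_eq_zero_of_lt_order hlt
  have h2 : y.coeff (x - y).order = 0 :=
    HahnSeries.coeff_eq_zero_of_lt_order (hlt.trans h)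
  have h3 := HahnSeries.coeff_order_eq_zero.not.mpr hne
  rw [HahnSeries.coeff_sub, h1, h2, sub_zero] at h3
  exact h3 rfl

/-- Monomial lifts always exist. -/
lemma exists_lift {p q : ℕ} (P : Matrix (Fin p) (Fin q) ℝ) :
    ∃ F : Matrix (Fin p) (Fin q) K, IsLift F P := by
  refine ⟨Matrix.of fun i j => HahnSeries.single (P i j) (1 : ℂ), fun i j => ?_⟩
  exact Kdeg_eq_of (HahnSeries.single_ne_zero one_ne_zero)
    (HahnSeries.order_single one_ne_zero)

/-- The padding linear map `x ↦ (x, 0)`. -/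
def padMap (d : ℕ) : (Fin d → K) →ₗ[K] (Fin (d+1) → K) where
  toFun x := Fin.snoc x 0
  map_add' x y := by
    funext i
    refine Fin.lastCases ?_ (fun i => ?_) i <;> simp
  map_smul' c x := by
    funext i
    refine Fin.lastCases ?_ (fun i => ?_) i <;> simp

lemma padMap_injective (d : ℕ) : Function.Injective (padMap d) := by
  intro x y h
  funext i
  have := congrFun h i.castSucc
  simpa [padMap] using this

set_option maxHeartbeats 1000000 in
/-- Key rank inequality: Schur-style column reduction. -/
lemma rank_lower {d n : ℕ} (F : Matrix (Fin (d+1)) (Fin (n+1)) K)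
    (G : Matrix (Fin d) (Fin n) K)
    (hδ : F (Fin.last d) (Fin.last n) ≠ 0)
    (hG : ∀ i j, G i j = F (Fin.last d) (Fin.last n) * F i.castSucc j.castSucc
      - F i.castSucc (Fin.last n) * F (Fin.last d) j.castSucc) :
    G.rank + 1 ≤ F.rank := by
  classical
  haveI : FiniteDimensional K (Fin (d+1) → K) := inferInstance
  set V := LinearMap.range F.mulVecLin with hV
  have hcol : ∀ v : Fin (n+1), (fun u => F u v) ∈ V := by
    intro v
    refine ⟨Pi.single v 1, ?_⟩
    rw [Matrix.mulVecLin_apply, Matrix.mulVec_single]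
    funext u; simp
  set U : Submodule K (Fin (d+1) → K) :=
    Submodule.map (padMap d) (Submodule.span K (Set.range Gᵀ)) with hU
  have hUV : U ≤ V := by
    rw [hU, ← Submodule.span_image]
    rw [Submodule.span_le]
    rintro _ ⟨_, ⟨j, rfl⟩, rfl⟩
    have heq : (padMap d) (Gᵀ j)
        = F (Fin.last d) (Fin.last n) • (fun u => F u j.castSucc)
          - F (Fin.last d) j.castSucc • (fun u => F u (Fin.last n)) := by
      funext u
      refine Fin.lastCases ?_ (fun i => ?_) u
      · simp [padMap]; ring
      · simp [padMap, Matrix.transpose_apply, hG i j]; ring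
    rw [heq]
    exact Submodule.sub_mem _ (Submodule.smul_mem _ _ (hcol _))
      (Submodule.smul_mem _ _ (hcol _))
  have hlastU : (fun u => F u (Fin.last n)) ∉ U := by
    rintro ⟨w, _, hw⟩
    have := congrFun hw (Fin.last d)
    simp [padMap] at this
    exact hδ this.symm
  set U' : Submodule K (Fin (d+1) → K) :=
    U ⊔ Submodule.span K {fun u => F u (Fin.last n)} with hU'
  have hU'V : U' ≤ V := sup_le hUV (by
    rw [Submodule.span_le, Set.singleton_subset_iff]
    exact hcol _)
  have hlt : U < U' := by
    refine lt_of_le_of_ne le_sup_left (fun h => hlastU ?_)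
    rw [h]
    exact le_sup_right (α := Submodule K (Fin (d+1) → K))
      (Submodule.mem_span_singleton_self _)
  have h1 : Module.finrank K U + 1 ≤ Module.finrank K U' :=
    Submodule.finrank_lt_finrank_of_lt hlt
  have h2 : Module.finrank K U' ≤ Module.finrank K V := Submodule.finrank_mono hU'V
  have h3 : Module.finrank K U = G.rank := by
    rw [hU, Matrix.rank, Matrix.range_mulVecLin]
    exact ((Submodule.equivMapOfInjective _ (padMap_injective d) _).finrank_eq).symm
  have h4 : F.rank = Module.finrank K V := rfl
  omega

/-- Extend a permutation of `Fin m` to a permutation of `Fin (m+1)` sending `i₀` to `j₀`. -/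
def extPerm {m : ℕ} (i₀ j₀ : Fin (m+1)) (π : Equiv.Perm (Fin m)) : Equiv.Perm (Fin (m+1)) :=
  (finSuccEquiv' i₀).trans ((Equiv.optionCongr π).trans (finSuccEquiv' j₀).symm)

lemma extPerm_at {m : ℕ} (i₀ j₀ : Fin (m+1)) (π : Equiv.Perm (Fin m)) :
    extPerm i₀ j₀ π i₀ = j₀ := by
  simp [extPerm]

lemma extPerm_succAbove {m : ℕ} (i₀ j₀ : Fin (m+1)) (π : Equiv.Perm (Fin m)) (j : Fin m) :
    extPerm i₀ j₀ π (i₀.succAbove j) = j₀.succAbove (π j) := by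
  simp [extPerm]

lemma extPerm_injective {m : ℕ} (i₀ j₀ : Fin (m+1)) {π π' : Equiv.Perm (Fin m)}
    (h : extPerm i₀ j₀ π = extPerm i₀ j₀ π') : π = π' := by
  ext j
  have := congrArg (fun σ : Equiv.Perm (Fin (m+1)) => σ (i₀.succAbove j)) h
  simp only [extPerm_succAbove] at this
  exact congrArg Fin.val (Fin.succAbove_right_injective this)

lemma exists_extPerm {m : ℕ} {i₀ j₀ : Fin (m+1)} (τ : Equiv.Perm (Fin (m+1)))
    (h : τ i₀ = j₀) : ∃ π : Equiv.Perm (Fin m), extPerm i₀ j₀ π = τ := by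
  set e : Option (Fin m) ≃ Option (Fin m) :=
    (finSuccEquiv' i₀).symm.trans (τ.trans (finSuccEquiv' j₀)) with he
  have hnone : e none = none := by simp [he, h]
  refine ⟨e.removeNone, ?_⟩
  ext x
  rcases eq_or_ne x i₀ with rfl | hx
  · rw [extPerm_at, h]
  · obtain ⟨z, rfl⟩ := Fin.exists_succAbove_eq hx
    rw [extPerm_succAbove]
    have hsome : ∃ y, e (some z) = some y := by
      rcases h' : e (some z) with _ | y
      · exact absurd (e.injective (h'.trans hnone.symm)) (by simp)
      · exact ⟨y, rfl⟩
    have h2 := Equiv.removeNone_some e hsome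
    have he2 : e (some z) = finSuccEquiv' j₀ (τ (i₀.succAbove z)) := by simp [he]
    rw [he2] at h2
    have := congrArg (finSuccEquiv' j₀).symm h2
    exact congrArg Fin.val (by simpa using this)

/-- Cost decomposition for an extended permutation. -/
lemma cost_extPerm {m : ℕ} (S : Matrix (Fin (m+1)) (Fin (m+1)) ℝ) (i₀ j₀ : Fin (m+1))
    (π : Equiv.Perm (Fin m)) :
    ∑ i, S i (extPerm i₀ j₀ π i)
      = S i₀ j₀ + ∑ j, S (i₀.succAbove j) (j₀.succAbove (π j)) := by
  rw [Fin.sum_univ_succAbove (fun i => S i (extPerm i₀ j₀ π i)) i₀, extPerm_at]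
  simp only [extPerm_succAbove]

/-- Deleting a row together with its column in the unique optimal permutation preserves
tropical non-singularity. -/
lemma tropNonsing_delete {m : ℕ} (S : Matrix (Fin (m+1)) (Fin (m+1)) ℝ)
    (σ : Equiv.Perm (Fin (m+1)))
    (hmin : ∀ τ : Equiv.Perm (Fin (m+1)), ∑ i, S i (σ i) ≤ ∑ i, S i (τ i))
    (huniq : ∀ τ' : Equiv.Perm (Fin (m+1)),
      (∀ τ : Equiv.Perm (Fin (m+1)), ∑ i, S i (τ' i) ≤ ∑ i, S i (τ i)) → τ' = σ)
    (i₀ : Fin (m+1)) :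
    TropNonsing (S.submatrix i₀.succAbove ((σ i₀).succAbove)) := by
  obtain ⟨σ₁, hσ₁⟩ := exists_extPerm σ (rfl : σ i₀ = σ i₀)
  have hcost : ∀ π : Equiv.Perm (Fin m),
      ∑ i, S i (extPerm i₀ (σ i₀) π i)
        = S i₀ (σ i₀) + ∑ j, (S.submatrix i₀.succAbove ((σ i₀).succAbove)) j (π j) := by
    intro π
    rw [cost_extPerm]
    rfl
  have hσcost : ∑ i, S i (σ i)
      = S i₀ (σ i₀) + ∑ j, (S.submatrix i₀.succAbove ((σ i₀).succAbove)) j (σ₁ j) := by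
    rw [← hcost σ₁, hσ₁]
  refine ⟨σ₁, ?_, ?_⟩
  · intro τ₀
    have h1 := hmin (extPerm i₀ (σ i₀) τ₀)
    rw [hcost, hσcost] at h1
    linarith
  · intro π hπ
    have hminπ : ∀ τ : Equiv.Perm (Fin (m+1)),
        ∑ i, S i (extPerm i₀ (σ i₀) π i) ≤ ∑ i, S i (τ i) := by
      intro τ
      calc ∑ i, S i (extPerm i₀ (σ i₀) π i)
          = S i₀ (σ i₀) + ∑ j, (S.submatrix i₀.succAbove ((σ i₀).succAbove)) j (π j) :=
            hcost π
        _ ≤ S i₀ (σ i₀) + ∑ j, (S.submatrix i₀.succAbove ((σ i₀).succAbove)) j (σ₁ j) := by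
            have := hπ σ₁; linarith
        _ = ∑ i, S i (σ i) := hσcost.symm
        _ ≤ ∑ i, S i (τ i) := hmin τ
    have h2 := (huniq _ hminπ).trans hσ₁.symm
    exact extPerm_injective _ _ h2

lemma zero_mem_tropSet {p q : ℕ} (P : Matrix (Fin p) (Fin q) ℝ) :
    0 ∈ {k : ℕ | ∃ (ρ : Fin k → Fin p) (c : Fin k → Fin q),
      Function.Injective ρ ∧ Function.Injective c ∧ TropNonsing (P.submatrix ρ c)} := by
  refine ⟨Fin.elim0, Fin.elim0, fun x => x.elim0, fun x => x.elim0, Equiv.refl _, ?_, ?_⟩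
  · intro τ; simp
  · intro τ _; exact Subsingleton.elim _ _

lemma tropSet_bddAbove {p q : ℕ} (P : Matrix (Fin p) (Fin q) ℝ) :
    BddAbove {k : ℕ | ∃ (ρ : Fin k → Fin p) (c : Fin k → Fin q),
      Function.Injective ρ ∧ Function.Injective c ∧ TropNonsing (P.submatrix ρ c)} := by
  refine ⟨p, fun x hx => ?_⟩
  obtain ⟨ρ, _, hρ, _, _⟩ := hx
  simpa using Fintype.card_le_of_injective ρ hρ

/-- Injectivity of the bordered row/column selection. -/
lemma snoc_castSucc_injective {p q : ℕ} {f : Fin p → Fin q} (hf : Function.Injective f) :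
    Function.Injective
      (Fin.snoc (fun i => (f i).castSucc) (Fin.last q) : Fin (p+1) → Fin (q+1)) := by
  intro x y hxy
  rcases Fin.eq_castSucc_or_eq_last x with ⟨x', rfl⟩ | rfl <;>
    rcases Fin.eq_castSucc_or_eq_last y with ⟨y', rfl⟩ | rfl
  · simp only [Fin.snoc_castSucc] at hxy
    rw [hf (Fin.castSucc_inj.mp hxy)]
  · simp only [Fin.snoc_castSucc, Fin.snoc_last] at hxy
    exact absurd hxy (Fin.castSucc_lt_last _).ne
  · simp only [Fin.snoc_castSucc, Fin.snoc_last] at hxy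
    exact absurd hxy.symm (Fin.castSucc_lt_last _).ne
  · rfl

/-- Any permutation moving the last index far has large cost. -/
lemma cost_big {m : ℕ} (S : Matrix (Fin (m+1)) (Fin (m+1)) ℝ) (τ : Equiv.Perm (Fin (m+1)))
    (CC MM : ℝ) (hCC0 : 0 ≤ CC) (hlow : ∀ u v, -CC ≤ S u v)
    (hτ : τ (Fin.last m) ≠ Fin.last m)
    (hrow : S (Fin.last m) (τ (Fin.last m)) = MM)
    (hcol : S (τ.symm (Fin.last m)) (Fin.last m) = MM) :
    2 * MM - (m : ℝ) * CC ≤ ∑ i, S i (τ i) := by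
  classical
  set a₀ := τ.symm (Fin.last m) with ha₀def
  have hτa₀ : τ a₀ = Fin.last m := Equiv.apply_symm_apply τ _
  have ha₀ : a₀ ≠ Fin.last m := by
    intro h; rw [h] at hτa₀; exact hτ hτa₀
  have hsplit1 : ∑ i, S i (τ i)
      = S (Fin.last m) (τ (Fin.last m)) + ∑ i ∈ Finset.univ.erase (Fin.last m), S i (τ i) :=
    (Finset.add_sum_erase _ _ (Finset.mem_univ _)).symm
  have ha₀mem : a₀ ∈ Finset.univ.erase (Fin.last m) :=
    Finset.mem_erase.mpr ⟨ha₀, Finset.mem_univ _⟩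
  have hsplit2 : ∑ i ∈ Finset.univ.erase (Fin.last m), S i (τ i)
      = S a₀ (τ a₀) + ∑ i ∈ (Finset.univ.erase (Fin.last m)).erase a₀, S i (τ i) :=
    (Finset.add_sum_erase _ _ ha₀mem).symm
  have hrest := Finset.card_nsmul_le_sum ((Finset.univ.erase (Fin.last m)).erase a₀)
    (fun i => S i (τ i)) (-CC) (fun x _ => hlow x (τ x))
  have hcard : ((Finset.univ.erase (Fin.last m)).erase a₀).card = m - 1 := by
    rw [Finset.card_erase_of_mem ha₀mem, Finset.card_erase_of_mem (Finset.mem_univ _),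
      Finset.card_univ, Fintype.card_fin]
    omega
  rw [hcard, nsmul_eq_mul] at hrest
  have h1 : ((m - 1 : ℕ) : ℝ) * CC ≤ (m : ℝ) * CC := by
    apply mul_le_mul_of_nonneg_right _ hCC0
    exact_mod_cast Nat.sub_le m 1
  have h2 : ((m - 1 : ℕ) : ℝ) * (-CC) = -(((m - 1 : ℕ) : ℝ) * CC) := by ring
  rw [hsplit1, hsplit2, hrow, hτa₀, hcol]
  rw [h2] at hrest
  linarith

end Aux


theorem extend_gap_to_larger_rank (d n r : ℕ) (A : Matrix (Fin d) (Fin n) ℝ)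
    (ht : tropRank A = r) (hk : r < kapRank A) :
    ∃ B : Matrix (Fin (d + 1)) (Fin (n + 1)) ℝ,
      tropRank B = r + 1 ∧ r + 1 < kapRank B := by
  classical
  -- degenerate cases: `d = 0` or `n = 0` contradict `r < kapRank A`
  rcases Nat.eq_zero_or_pos d with rfl | hd
  · exfalso
    obtain ⟨F, hF⟩ := exists_lift A
    have h0 : kapRank A ≤ F.rank := by
      unfold kapRank; exact Nat.sInf_le ⟨F, hF, rfl⟩
    have := Matrix.rank_le_height F
    omega
  rcases Nat.eq_zero_or_pos n with rfl | hn
  · exfalso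
    obtain ⟨F, hF⟩ := exists_lift A
    have h0 : kapRank A ≤ F.rank := by
      unfold kapRank; exact Nat.sInf_le ⟨F, hF, rfl⟩
    have := Matrix.rank_le_width F
    omega
  -- tropical data of A
  unfold tropRank at ht
  have hrmem := Nat.sSup_mem ⟨0, zero_mem_tropSet A⟩ (tropSet_bddAbove A)
  rw [ht] at hrmem
  have hle : ∀ x ∈ {k : ℕ | ∃ (ρ : Fin k → Fin d) (c : Fin k → Fin n),
      Function.Injective ρ ∧ Function.Injective c ∧ TropNonsing (A.submatrix ρ c)},
      x ≤ r := by
    intro x hx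
    have h := le_csSup (tropSet_bddAbove A) hx
    rw [ht] at h
    exact h
  obtain ⟨ρ, c, hρ, hc, σ₀, hσ₀min, hσ₀uniq⟩ := hrmem
  have hrd : r ≤ d := by simpa using Fintype.card_le_of_injective ρ hρ
  have hrn : r ≤ n := by simpa using Fintype.card_le_of_injective c hc
  -- constants
  set C : ℝ := Finset.sup' Finset.univ ⟨((⟨0, hd⟩ : Fin d), (⟨0, hn⟩ : Fin n)),
    Finset.mem_univ _⟩ (fun p : Fin d × Fin n => |A p.1 p.2|) with hCdef
  have hC : ∀ i j, |A i j| ≤ C := fun i j =>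
    Finset.le_sup' (fun p : Fin d × Fin n => |A p.1 p.2|) (Finset.mem_univ (i, j))
  have hC0 : 0 ≤ C := le_trans (abs_nonneg _) (hC ⟨0, hd⟩ ⟨0, hn⟩)
  have hCle : ∀ i j, A i j ≤ C := fun i j => (abs_le.mp (hC i j)).2
  have hCge : ∀ i j, -C ≤ A i j := fun i j => (abs_le.mp (hC i j)).1
  set M : ℝ := ((d : ℝ) + n + 1) * (C + 1) with hMdef
  have hdn0 : (0 : ℝ) ≤ (d : ℝ) + n := by positivity
  have hM1 : ((d : ℝ) + n) * C < M := by nlinarith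
  have hM0 : 0 < M := by positivity
  have hMC : C < M := by nlinarith
  -- the bordered matrix
  set B : Matrix (Fin (d+1)) (Fin (n+1)) ℝ := Matrix.of (fun i j =>
    if hi : (i : ℕ) < d then
      (if hj : (j : ℕ) < n then A ⟨i, hi⟩ ⟨j, hj⟩ else M)
    else (if hj : (j : ℕ) < n then M else 0)) with hBdef
  -- entry computations
  have hBint : ∀ (u : Fin (d+1)) (v : Fin (n+1)) (hu : u ≠ Fin.last d) (hv : v ≠ Fin.last n),
      B u v = A (u.castPred hu) (v.castPred hv) := by
    intro u v hu hv
    rw [hBdef]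
    simp only [Matrix.of_apply]
    rw [dif_pos (Fin.val_lt_last hu), dif_pos (Fin.val_lt_last hv)]
    rfl
  have hB11 : ∀ (a : Fin d) (b : Fin n), B a.castSucc b.castSucc = A a b := by
    intro a b
    rw [hBint _ _ (Fin.castSucc_lt_last a).ne (Fin.castSucc_lt_last b).ne]
    simp [Fin.castPred_castSucc]
  have hBrow : ∀ (u : Fin (d+1)), u ≠ Fin.last d → B u (Fin.last n) = M := by
    intro u hu
    rw [hBdef]; simp only [Matrix.of_apply]
    rw [dif_pos (Fin.val_lt_last hu), dif_neg (by simp)]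
  have hBcol : ∀ (v : Fin (n+1)), v ≠ Fin.last n → B (Fin.last d) v = M := by
    intro v hv
    rw [hBdef]; simp only [Matrix.of_apply]
    rw [dif_neg (by simp), dif_pos (Fin.val_lt_last hv)]
  have hBcor : B (Fin.last d) (Fin.last n) = 0 := by
    rw [hBdef]; simp only [Matrix.of_apply]
    rw [dif_neg (by simp), dif_neg (by simp)]
  have hBlow : ∀ u v, -C ≤ B u v := by
    intro u v
    rcases eq_or_ne u (Fin.last d) with rfl | hu <;>
      rcases eq_or_ne v (Fin.last n) with rfl | hv
    · rw [hBcor]; linarith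
    · rw [hBcol _ hv]; linarith
    · rw [hBrow _ hu]; linarith
    · rw [hBint _ _ hu hv]; exact hCge _ _
  have hBle : ∀ (u : Fin (d+1)) (v : Fin (n+1)), u ≠ Fin.last d → v ≠ Fin.last n →
      B u v ≤ C := by
    intro u v hu hv
    rw [hBint _ _ hu hv]; exact hCle _ _
  refine ⟨B, ?_, ?_⟩
  · -- tropical rank of B is r + 1
    set ρ' : Fin (r+1) → Fin (d+1) :=
      Fin.snoc (fun i => (ρ i).castSucc) (Fin.last d) with hρ'def
    set c' : Fin (r+1) → Fin (n+1) :=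
      Fin.snoc (fun j => (c j).castSucc) (Fin.last n) with hc'def
    have hρ'cs : ∀ i : Fin r, ρ' i.castSucc = (ρ i).castSucc :=
      fun i => Fin.snoc_castSucc _ _ i
    have hc'cs : ∀ j : Fin r, c' j.castSucc = (c j).castSucc :=
      fun j => Fin.snoc_castSucc _ _ j
    have hρ'l : ρ' (Fin.last r) = Fin.last d := Fin.snoc_last _ _
    have hc'l : c' (Fin.last r) = Fin.last n := Fin.snoc_last _ _
    have hρ'ne : ∀ x : Fin (r+1), x ≠ Fin.last r → ρ' x ≠ Fin.last d := by
      intro x hx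
      obtain ⟨x', rfl⟩ | rfl := Fin.eq_castSucc_or_eq_last x
      · rw [hρ'cs]; exact (Fin.castSucc_lt_last _).ne
      · exact absurd rfl hx
    have hc'ne : ∀ x : Fin (r+1), x ≠ Fin.last r → c' x ≠ Fin.last n := by
      intro x hx
      obtain ⟨x', rfl⟩ | rfl := Fin.eq_castSucc_or_eq_last x
      · rw [hc'cs]; exact (Fin.castSucc_lt_last _).ne
      · exact absurd rfl hx
    have hS'cor : B.submatrix ρ' c' (Fin.last r) (Fin.last r) = 0 := by
      show B (ρ' (Fin.last r)) (c' (Fin.last r)) = 0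
      rw [hρ'l, hc'l, hBcor]
    have hS'low : ∀ u v, -C ≤ B.submatrix ρ' c' u v := fun u v => hBlow _ _
    have hcostA : ∀ π : Equiv.Perm (Fin r),
        ∑ i, B.submatrix ρ' c' i (extPerm (Fin.last r) (Fin.last r) π i)
          = ∑ j, A.submatrix ρ c j (π j) := by
      intro π
      rw [cost_extPerm, hS'cor, zero_add]
      simp only [Fin.succAbove_last]
      refine Finset.sum_congr rfl fun j _ => ?_
      show B (ρ' j.castSucc) (c' ((π j).castSucc)) = A.submatrix ρ c j (π j)
      rw [hρ'cs, hc'cs, hB11]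
      rfl
    have hsmall : ∑ j, A.submatrix ρ c j (σ₀ j) ≤ (r : ℝ) * C := by
      have h := Finset.sum_le_card_nsmul Finset.univ
        (fun j => A.submatrix ρ c j (σ₀ j)) C (fun x _ => hCle _ _)
      simpa [nsmul_eq_mul, Finset.card_univ] using h
    have hrC : (r : ℝ) * C ≤ ((d : ℝ) + n) * C := by
      apply mul_le_mul_of_nonneg_right _ hC0
      have : (r : ℝ) ≤ (d : ℝ) := by exact_mod_cast hrd
      linarith
    have hbig : ∀ τ : Equiv.Perm (Fin (r+1)), τ (Fin.last r) ≠ Fin.last r →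
        2 * M - ((d : ℝ) + n) * C ≤ ∑ i, B.submatrix ρ' c' i (τ i) := by
      intro τ hτ
      have hrowM : B.submatrix ρ' c' (Fin.last r) (τ (Fin.last r)) = M := by
        show B (ρ' (Fin.last r)) (c' (τ (Fin.last r))) = M
        rw [hρ'l]
        exact hBcol _ (hc'ne _ hτ)
      have ha₀ : τ.symm (Fin.last r) ≠ Fin.last r := by
        intro h
        have h2 := Equiv.apply_symm_apply τ (Fin.last r)
        rw [h] at h2
        exact hτ h2
      have hcolM : B.submatrix ρ' c' (τ.symm (Fin.last r)) (Fin.last r) = M := by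
        show B (ρ' (τ.symm (Fin.last r))) (c' (Fin.last r)) = M
        rw [hc'l]
        exact hBrow _ (hρ'ne _ ha₀)
      have h := cost_big (B.submatrix ρ' c') τ C M hC0 hS'low hτ hrowM hcolM
      have h2 : 2 * M - ((d : ℝ) + n) * C ≤ 2 * M - (r : ℝ) * C := by linarith
      linarith
    have hNSB : TropNonsing (B.submatrix ρ' c') := by
      refine ⟨extPerm (Fin.last r) (Fin.last r) σ₀, ?_, ?_⟩
      · intro τ
        rw [hcostA σ₀]
        by_cases hτl : τ (Fin.last r) = Fin.last r
        · obtain ⟨π, rfl⟩ := exists_extPerm τ hτl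
          rw [hcostA]
          exact hσ₀min π
        · have h := hbig τ hτl
          have h2 : ∑ j, A.submatrix ρ c j (σ₀ j) ≤ ((d : ℝ) + n) * C :=
            le_trans hsmall hrC
          linarith
      · intro π' hπ'
        have hπ'l : π' (Fin.last r) = Fin.last r := by
          by_contra hne
          have h := hbig π' hne
          have h1 := hπ' (extPerm (Fin.last r) (Fin.last r) σ₀)
          rw [hcostA σ₀] at h1
          have h2 : ∑ j, A.submatrix ρ c j (σ₀ j) ≤ ((d : ℝ) + n) * C :=
            le_trans hsmall hrC
          linarith
        obtain ⟨π₀, rfl⟩ := exists_extPerm π' hπ'l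
        have hπ₀ : π₀ = σ₀ := by
          apply hσ₀uniq
          intro τ₀
          have h := hπ' (extPerm (Fin.last r) (Fin.last r) τ₀)
          rwa [hcostA, hcostA] at h
        rw [hπ₀]
    have hmemB : (r+1) ∈ {k : ℕ | ∃ (ρ₂ : Fin k → Fin (d+1)) (c₂ : Fin k → Fin (n+1)),
        Function.Injective ρ₂ ∧ Function.Injective c₂ ∧ TropNonsing (B.submatrix ρ₂ c₂)} :=
      ⟨ρ', c', hρ'def ▸ snoc_castSucc_injective hρ, hc'def ▸ snoc_castSucc_injective hc, hNSB⟩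
    have hub : ∀ x ∈ {k : ℕ | ∃ (ρ₂ : Fin k → Fin (d+1)) (c₂ : Fin k → Fin (n+1)),
        Function.Injective ρ₂ ∧ Function.Injective c₂ ∧ TropNonsing (B.submatrix ρ₂ c₂)},
        x ≤ r + 1 := by
      intro k hkmem
      have hfinish : ∀ {m : ℕ} (ρ₂ : Fin m → Fin (d+1)) (c₂ : Fin m → Fin (n+1)),
          Function.Injective ρ₂ → Function.Injective c₂ →
          (∀ x, ρ₂ x ≠ Fin.last d) → (∀ x, c₂ x ≠ Fin.last n) →
          TropNonsing (B.submatrix ρ₂ c₂) → m ≤ r := by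
        intro m ρ₂ c₂ hρ₂ hc₂ hρ₂ne hc₂ne hNS₂
        apply hle
        refine ⟨fun x => (ρ₂ x).castPred (hρ₂ne x), fun x => (c₂ x).castPred (hc₂ne x),
          ?_, ?_, ?_⟩
        · intro x y hxy
          apply hρ₂
          apply Fin.ext
          have := congrArg Fin.val hxy
          simpa using this
        · intro x y hxy
          apply hc₂
          apply Fin.ext
          have := congrArg Fin.val hxy
          simpa using this
        · have hEq : A.submatrix (fun x => (ρ₂ x).castPred (hρ₂ne x))
              (fun x => (c₂ x).castPred (hc₂ne x)) = B.submatrix ρ₂ c₂ := by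
            ext x y
            exact (hBint _ _ _ _).symm
          rw [hEq]
          exact hNS₂
      rcases k with _ | m
      · omega
      obtain ⟨ρ₁, c₁, hρ₁, hc₁, σ₁, hmin₁, huniq₁⟩ := hkmem
      by_cases hrowex : ∃ a, ρ₁ a = Fin.last d
      · obtain ⟨a, ha⟩ := hrowex
        by_cases hcolex : ∃ b, c₁ b = Fin.last n
        · obtain ⟨b, hb⟩ := hcolex
          have hab : σ₁ a = b := by
            by_contra hab
            set a' := σ₁.symm b with ha'def
            have hσa' : σ₁ a' = b := Equiv.apply_symm_apply σ₁ b
            have ha' : a' ≠ a := fun h => hab (h ▸ hσa')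
            have hswap := hmin₁ ((Equiv.swap a a').trans σ₁)
            simp only [Equiv.trans_apply] at hswap
            have hre : ∑ i, B.submatrix ρ₁ c₁ i (σ₁ ((Equiv.swap a a') i))
                = ∑ i, B.submatrix ρ₁ c₁ ((Equiv.swap a a') i) (σ₁ i) := by
              have h := Equiv.sum_comp (Equiv.swap a a')
                (fun i => B.submatrix ρ₁ c₁ ((Equiv.swap a a') i) (σ₁ i))
              rw [← h]
              refine Finset.sum_congr rfl fun i _ => ?_
              simp [Equiv.swap_apply_self]
            have hzero : ∀ x ∈ (Finset.univ : Finset (Fin (m+1))), x ≠ a ∧ x ≠ a' →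
                (fun i => B.submatrix ρ₁ c₁ i (σ₁ i)
                  - B.submatrix ρ₁ c₁ ((Equiv.swap a a') i) (σ₁ i)) x = 0 := by
              intro x _ hx
              simp only
              rw [Equiv.swap_apply_of_ne_of_ne hx.1 hx.2, sub_self]
            have hsum := Finset.sum_eq_add a a' (Ne.symm ha') hzero (by simp) (by simp)
            simp only [Equiv.swap_apply_left, Equiv.swap_apply_right] at hsum
            have hsub : ∑ i, (B.submatrix ρ₁ c₁ i (σ₁ i)
                - B.submatrix ρ₁ c₁ ((Equiv.swap a a') i) (σ₁ i))
                = ∑ i, B.submatrix ρ₁ c₁ i (σ₁ i)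
                  - ∑ i, B.submatrix ρ₁ c₁ ((Equiv.swap a a') i) (σ₁ i) :=
              Finset.sum_sub_distrib _ _
            have hv1 : B.submatrix ρ₁ c₁ a (σ₁ a) = M := by
              show B (ρ₁ a) (c₁ (σ₁ a)) = M
              rw [ha]
              apply hBcol
              intro h
              exact hab (hc₁ (h.trans hb.symm))
            have hv2 : B.submatrix ρ₁ c₁ a' (σ₁ a') = M := by
              show B (ρ₁ a') (c₁ (σ₁ a')) = M
              rw [hσa', hb]
              apply hBrow
              intro h
              exact ha' (hρ₁ (h.trans ha.symm))
            have hv3 : B.submatrix ρ₁ c₁ a (σ₁ a') = 0 := by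
              show B (ρ₁ a) (c₁ (σ₁ a')) = 0
              rw [hσa', ha, hb, hBcor]
            have hv4 : B.submatrix ρ₁ c₁ a' (σ₁ a) ≤ C := by
              show B (ρ₁ a') (c₁ (σ₁ a)) ≤ C
              apply hBle
              · intro h; exact ha' (hρ₁ (h.trans ha.symm))
              · intro h; exact hab (hc₁ (h.trans hb.symm))
            rw [hsum] at hsub
            linarith
          have hdel := tropNonsing_delete (B.submatrix ρ₁ c₁) σ₁ hmin₁ huniq₁ a
          rw [Matrix.submatrix_submatrix] at hdel
          have hm : m ≤ r := by
            apply hfinish _ _ (hρ₁.comp Fin.succAbove_right_injective)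
              (hc₁.comp Fin.succAbove_right_injective) ?_ ?_ hdel
            · intro x h
              exact Fin.succAbove_ne a x (hρ₁ (h.trans ha.symm))
            · intro x h
              have h2 := hc₁ (h.trans hb.symm)
              rw [← hab] at h2
              exact Fin.succAbove_ne (σ₁ a) x h2
          omega
        · push_neg at hcolex
          have hdel := tropNonsing_delete (B.submatrix ρ₁ c₁) σ₁ hmin₁ huniq₁ a
          rw [Matrix.submatrix_submatrix] at hdel
          have hm : m ≤ r := by
            apply hfinish _ _ (hρ₁.comp Fin.succAbove_right_injective)
              (hc₁.comp Fin.succAbove_right_injective) ?_ ?_ hdel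
            · intro x h
              exact Fin.succAbove_ne a x (hρ₁ (h.trans ha.symm))
            · intro x h
              exact hcolex _ h
          omega
      · push_neg at hrowex
        by_cases hcolex : ∃ b, c₁ b = Fin.last n
        · obtain ⟨b, hb⟩ := hcolex
          have hdel := tropNonsing_delete (B.submatrix ρ₁ c₁) σ₁ hmin₁ huniq₁ (σ₁.symm b)
          rw [Matrix.submatrix_submatrix] at hdel
          have hσb : σ₁ (σ₁.symm b) = b := Equiv.apply_symm_apply _ _
          have hm : m ≤ r := by
            apply hfinish _ _ (hρ₁.comp Fin.succAbove_right_injective)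
              (hc₁.comp Fin.succAbove_right_injective) ?_ ?_ hdel
            · intro x h
              exact hrowex _ h
            · intro x h
              have h2 := hc₁ (h.trans hb.symm)
              rw [hσb] at h2
              exact Fin.succAbove_ne _ x h2
          omega
        · push_neg at hcolex
          have hm : m + 1 ≤ r :=
            hfinish ρ₁ c₁ hρ₁ hc₁ (fun x => hrowex x) (fun x => hcolex x)
              ⟨σ₁, hmin₁, huniq₁⟩
          omega
    unfold tropRank
    apply le_antisymm
    · exact csSup_le ⟨r+1, hmemB⟩ hub
    · exact le_csSup ⟨r+1, fun x hx => hub x hx⟩ hmemB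
  · -- Kapranov rank of B is at least r + 2
    have hAlb : ∀ G : Matrix (Fin d) (Fin n) K, IsLift G A → r + 1 ≤ G.rank := by
      intro G hG
      have h1 : kapRank A ≤ G.rank := by
        unfold kapRank; exact Nat.sInf_le ⟨G, hG, rfl⟩
      omega
    have hkey : ∀ F : Matrix (Fin (d+1)) (Fin (n+1)) K, IsLift F B → r + 2 ≤ F.rank := by
      intro F hF
      have hδ : F (Fin.last d) (Fin.last n) ≠ 0 ∧
          (F (Fin.last d) (Fin.last n)).order = 0 := by
        have h := hF (Fin.last d) (Fin.last n)
        rw [hBcor] at h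
        exact Kdeg_eq_real h
      set G : Matrix (Fin d) (Fin n) K := Matrix.of (fun i j =>
        F (Fin.last d) (Fin.last n) * F i.castSucc j.castSucc
          - F i.castSucc (Fin.last n) * F (Fin.last d) j.castSucc) with hGdef
      have hGlift : IsLift G A := by
        intro i j
        have hfij : F i.castSucc j.castSucc ≠ 0 ∧
            (F i.castSucc j.castSucc).order = A i j := by
          apply Kdeg_eq_real
          rw [← hB11 i j]
          exact hF _ _
        have hfil : F i.castSucc (Fin.last n) ≠ 0 ∧
            (F i.castSucc (Fin.last n)).order = M := by
          apply Kdeg_eq_real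
          rw [← hBrow i.castSucc (Fin.castSucc_lt_last i).ne]
          exact hF _ _
        have hflj : F (Fin.last d) j.castSucc ≠ 0 ∧
            (F (Fin.last d) j.castSucc).order = M := by
          apply Kdeg_eq_real
          rw [← hBcol j.castSucc (Fin.castSucc_lt_last j).ne]
          exact hF _ _
        have hx : F (Fin.last d) (Fin.last n) * F i.castSucc j.castSucc ≠ 0 :=
          mul_ne_zero hδ.1 hfij.1
        have hxo : (F (Fin.last d) (Fin.last n) * F i.castSucc j.castSucc).order = A i j := by
          rw [HahnSeries.order_mul hδ.1 hfij.1, hδ.2, hfij.2, zero_add]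
        have hy : F i.castSucc (Fin.last n) * F (Fin.last d) j.castSucc ≠ 0 :=
          mul_ne_zero hfil.1 hflj.1
        have hyo : (F i.castSucc (Fin.last n) * F (Fin.last d) j.castSucc).order = M + M := by
          rw [HahnSeries.order_mul hfil.1 hflj.1, hfil.2, hflj.2]
        have hlt : (F (Fin.last d) (Fin.last n) * F i.castSucc j.castSucc).order
            < (F i.castSucc (Fin.last n) * F (Fin.last d) j.castSucc).order := by
          rw [hxo, hyo]
          have := hCle i j
          linarith
        obtain ⟨hne, ho⟩ := order_sub_of_lt hx hlt
        have hoo : (G i j).order = A i j := by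
          rw [hGdef]
          simpa using (ho.trans hxo)
        have hnn : G i j ≠ 0 := by
          rw [hGdef]
          simpa using hne
        exact Kdeg_eq_of hnn hoo
      have h2 := rank_lower F G hδ.1 (fun i j => by rw [hGdef]; rfl)
      have h3 := hAlb G hGlift
      omega
    obtain ⟨F₀, hF₀⟩ := exists_lift B
    have hmem : kapRank B ∈ {s : ℕ | ∃ F : Matrix (Fin (d+1)) (Fin (n+1)) K,
        IsLift F B ∧ F.rank = s} := by
      unfold kapRank
      exact Nat.sInf_mem ⟨F₀.rank, F₀, hF₀, rfl⟩
    obtain ⟨F, hFl, hFr⟩ := hmem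
    have := hkey F hFl
    omega

end
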